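/- Let (W,S) be a Coxeter system, w ∈ W, and suppose w has two right descents s, t ∈ S. Then w has a reduced expression ending in the alternating word s-t-s-⋯ of length m_{s,t} (m_{s,t} letters alternating, ending appropriately). -/

import Mathlib

namespace RWB
open CoxeterSystem List

private lemma trig2 (X θ : ℝ) :
    2 * Real.cos θ * Real.sin (X + θ) - Real.sin X = Real.sin (X + 2 * θ) := by
  rw [Real.sin_add, Real.sin_add, Real.cos_two_mul, Real.sin_two_mul]
  ring

private lemma trig1 (X θ : ℝ) :
    (4 * Real.cos θ ^ 2 - 1) * Real.sin (X + θ) - 2 * Real.cos θ * Real.sin X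
      = Real.sin (X + 3 * θ) := by
  rw [Real.sin_add, Real.sin_add, Real.cos_three_mul, Real.sin_three_mul]
  linear_combination (4 * Real.cos X * Real.sin θ) * (Real.sin_sq_add_cos_sq θ)

variable {B : Type*} (Cm : CoxeterMatrix B)

/-- The matrix of the standard bilinear form. -/
noncomputable def kf (a b : B) : ℝ := - Real.cos (Real.pi / Cm a b)

lemma kf_diag (a : B) : kf Cm a a = 1 := by
  simp [kf, Cm.diagonal a, Real.cos_pi]

lemma kf_symm (a b : B) : kf Cm a b = kf Cm b a := by
  rw [kf, kf, Cm.symmetric]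

/-- `e a` -/
noncomputable def es (a : B) : B →₀ ℝ := Finsupp.single a 1

/-- The linear functional `v ↦ ⟨e a, v⟩`. -/
noncomputable def BLf (a : B) : (B →₀ ℝ) →ₗ[ℝ] ℝ :=
  Finsupp.linearCombination ℝ (fun b => kf Cm a b)

lemma BLf_es (a b : B) : BLf Cm a (es b) = kf Cm a b := by
  simp [BLf, es]

/-- The geometric reflection associated to `a`. -/
noncomputable def gsigma (a : B) : Module.End ℝ (B →₀ ℝ) :=
  LinearMap.id - ((2:ℝ) • BLf Cm a).smulRight (es a)

lemma gsigma_apply (a : B) (v : B →₀ ℝ) :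
    gsigma Cm a v = v - (2 * BLf Cm a v) • es a := by
  simp [gsigma, smul_smul]

lemma gsigma_es_self (a : B) : gsigma Cm a (es a) = - es a := by
  rw [gsigma_apply, BLf_es, kf_diag]
  module

lemma gsigma_es (a b : B) : gsigma Cm a (es b) = es b - (2 * kf Cm a b) • es a := by
  rw [gsigma_apply, BLf_es]

end RWB
namespace RWB
open CoxeterSystem List
variable {B : Type*} (Cm : CoxeterMatrix B)

section dihedral

variable (a b : B)

local notation "T" => gsigma Cm a * gsigma Cm b
local notation "θ" => Real.pi / (Cm a b : ℝ)
local notation "co" => Real.cos (Real.pi / (Cm a b : ℝ))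
local notation "si" => Real.sin (Real.pi / (Cm a b : ℝ))

lemma T_es_a : T (es a) =
    (4 * co ^ 2 - 1) • es a + (2 * co) • es b := by
  have hc : kf Cm b a = - co := by rw [← kf_symm]; rfl
  rw [Module.End.mul_apply, gsigma_es, hc, map_sub, map_smul, gsigma_es_self, gsigma_es,
    kf_symm, hc]
  module

lemma T_es_b : T (es b) = (-(2 * co)) • es a + (-1 : ℝ) • es b := by
  have hc : kf Cm a b = - co := rfl
  rw [Module.End.mul_apply, gsigma_es_self, map_neg, gsigma_es, hc]
  module

lemma T_pow_es (n : ℕ) :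
    si • ((T ^ n) (es a)) = Real.sin ((2 * n + 1) * θ) • es a
        + Real.sin ((2 * n) * θ) • es b ∧
    si • ((T ^ n) (es b)) = (- Real.sin ((2 * n) * θ)) • es a
        + (- Real.sin ((2 * n - 1) * θ)) • es b := by
  induction n with
  | zero =>
    constructor
    · norm_num
    · norm_num [Real.sin_neg]
  | succ n ih =>
    obtain ⟨ih1, ih2⟩ := ih
    have key1 : si • ((T ^ (n+1)) (es a)) =
        (4 * co ^ 2 - 1) • (si • ((T ^ n) (es a))) + (2 * co) • (si • ((T ^ n) (es b))) := by
      rw [pow_succ, Module.End.mul_apply, T_es_a Cm a b, map_add, map_smul, map_smul]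
      module
    have key2 : si • ((T ^ (n+1)) (es b)) =
        (-(2 * co)) • (si • ((T ^ n) (es a))) + (-1 : ℝ) • (si • ((T ^ n) (es b))) := by
      rw [pow_succ, Module.End.mul_apply, T_es_b Cm a b, map_add, map_smul, map_smul]
      module
    rw [key1, key2, ih1, ih2]
    have e1 : Real.sin ((2 * (n+1 : ℕ) + 1) * θ)
        = (4 * co ^ 2 - 1) * Real.sin ((2 * n + 1) * θ) - 2 * co * Real.sin ((2 * n) * θ) := by
      have := trig1 ((2 * n) * θ) θ
      push_cast
      rw [show ((2 * n) * θ + θ) = (2 * n + 1) * θ by ring] at this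
      rw [show ((2 * n) * θ + 3 * θ) = (2 * (n+1) + 1) * θ by ring] at this
      linarith
    have e2 : Real.sin ((2 * (n+1 : ℕ)) * θ)
        = (4 * co ^ 2 - 1) * Real.sin ((2 * n) * θ) - 2 * co * Real.sin ((2 * n - 1) * θ) := by
      have := trig1 ((2 * n - 1) * θ) θ
      push_cast
      rw [show ((2 * n - 1) * θ + θ) = (2 * n) * θ by ring] at this
      rw [show ((2 * n - 1) * θ + 3 * θ) = (2 * (n+1)) * θ by ring] at this
      linarith
    have e3 : Real.sin ((2 * (n+1 : ℕ)) * θ)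
        = 2 * co * Real.sin ((2 * n + 1) * θ) - Real.sin ((2 * n) * θ) := by
      have := trig2 ((2 * n) * θ) θ
      push_cast
      rw [show ((2 * n) * θ + θ) = (2 * n + 1) * θ by ring] at this
      rw [show ((2 * n) * θ + 2 * θ) = (2 * (n+1)) * θ by ring] at this
      linarith
    have e4 : Real.sin ((2 * (n+1 : ℕ) - 1) * θ)
        = 2 * co * Real.sin ((2 * n) * θ) - Real.sin ((2 * n - 1) * θ) := by
      have := trig2 ((2 * n - 1) * θ) θ
      push_cast
      rw [show ((2 * n - 1) * θ + θ) = (2 * n) * θ by ring] at this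
      rw [show ((2 * n - 1) * θ + 2 * θ) = (2 * (n+1) - 1) * θ by ring] at this
      linarith
    constructor
    · rw [e1, e2]; push_cast; module
    · rw [e3, e4]; push_cast; module

end dihedral
end RWB
namespace RWB
open CoxeterSystem List
variable {B : Type*} (Cm : CoxeterMatrix B)

lemma gsigma_sq (a : B) : gsigma Cm a * gsigma Cm a = 1 := by
  refine LinearMap.ext fun v => ?_
  rw [Module.End.mul_apply, Module.End.one_apply, gsigma_apply Cm a v, gsigma_apply,
    map_sub, map_smul, BLf_es, kf_diag]
  simp only [smul_eq_mul, mul_one]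
  module

lemma gsigma_fix {a b : B} {v : B →₀ ℝ} (ha : BLf Cm a v = 0) (hb : BLf Cm b v = 0) :
    (gsigma Cm a * gsigma Cm b) v = v := by
  rw [Module.End.mul_apply, gsigma_apply Cm b v, hb]
  simp only [mul_zero, zero_smul, sub_zero]
  rw [gsigma_apply, ha]
  simp

lemma gsigma_braid (a b : B) : (gsigma Cm a * gsigma Cm b) ^ (Cm a b) = 1 := by
  rcases eq_or_ne a b with rfl | hab
  · rw [Cm.diagonal, pow_one, gsigma_sq]
  rcases eq_or_ne (Cm a b) 0 with h0 | h0
  · rw [h0, pow_zero]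
  have h2 : 2 ≤ Cm a b := by
    have := Cm.off_diagonal a b hab
    omega
  have hmR : (0:ℝ) < ((Cm a b : ℕ) : ℝ) := by positivity
  have hm2R : (2:ℝ) ≤ ((Cm a b : ℕ) : ℝ) := by exact_mod_cast h2
  have hθpos : 0 < Real.pi / ((Cm a b : ℕ) : ℝ) := by positivity
  have hθlt : Real.pi / ((Cm a b : ℕ) : ℝ) < Real.pi := by
    rw [div_lt_iff₀ hmR]
    nlinarith [Real.pi_pos]
  have hsin : Real.sin (Real.pi / ((Cm a b : ℕ) : ℝ)) ≠ 0 :=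
    ne_of_gt (Real.sin_pos_of_pos_of_lt_pi hθpos hθlt)
  obtain ⟨hTa, hTb⟩ := T_pow_es Cm a b (Cm a b)
  have hang1 : ((2 * ((Cm a b : ℕ):ℝ) + 1) * (Real.pi / ((Cm a b : ℕ) : ℝ)))
      = Real.pi / ((Cm a b : ℕ) : ℝ) + 2 * Real.pi := by
    field_simp
    ring
  have hang2 : ((2 * ((Cm a b : ℕ):ℝ)) * (Real.pi / ((Cm a b : ℕ) : ℝ))) = 2 * Real.pi := by
    field_simp
  have hang3 : ((2 * ((Cm a b : ℕ):ℝ) - 1) * (Real.pi / ((Cm a b : ℕ) : ℝ)))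
      = -(Real.pi / ((Cm a b : ℕ) : ℝ)) + 2 * Real.pi := by
    field_simp
    ring
  rw [hang1, hang2, Real.sin_add_two_pi, Real.sin_two_pi] at hTa
  rw [hang2, hang3, Real.sin_add_two_pi, Real.sin_two_pi, Real.sin_neg] at hTb
  have hTma : ((gsigma Cm a * gsigma Cm b) ^ (Cm a b)) (es a) = es a := by
    refine smul_right_injective (B →₀ ℝ) hsin ?_
    beta_reduce
    rw [hTa]
    module
  have hTmb : ((gsigma Cm a * gsigma Cm b) ^ (Cm a b)) (es b) = es b := by
    refine smul_right_injective (B →₀ ℝ) hsin ?_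
    beta_reduce
    rw [hTb]
    module
  -- decompose an arbitrary vector
  refine LinearMap.ext fun v => ?_
  have hc2 : 1 - kf Cm a b ^ 2 ≠ 0 := by
    have hk : kf Cm a b = - Real.cos (Real.pi / ((Cm a b : ℕ) : ℝ)) := rfl
    have hpyth := Real.sin_sq_add_cos_sq (Real.pi / ((Cm a b : ℕ) : ℝ))
    have h' : 1 - kf Cm a b ^ 2 = Real.sin (Real.pi / ((Cm a b : ℕ) : ℝ)) ^ 2 := by
      rw [hk]; nlinarith
    rw [h']
    exact pow_ne_zero 2 hsin
  set c : ℝ := kf Cm a b with hcdef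
  set x : ℝ := (BLf Cm a v - c * BLf Cm b v) / (1 - c ^ 2) with hx
  set y : ℝ := (BLf Cm b v - c * BLf Cm a v) / (1 - c ^ 2) with hy
  set w : B →₀ ℝ := v - x • es a - y • es b with hw
  have hba : BLf Cm b (es a) = c := by rw [BLf_es, ← kf_symm]
  have hwa : BLf Cm a w = 0 := by
    rw [hw]
    simp only [map_sub, map_smul, BLf_es, kf_diag, smul_eq_mul, mul_one, ← hcdef]
    rw [hx, hy]
    field_simp
    ring
  have hwb : BLf Cm b w = 0 := by
    rw [hw]
    simp only [map_sub, map_smul, BLf_es, kf_diag, smul_eq_mul, mul_one, hba, ← hcdef]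
    rw [hx, hy]
    field_simp
    ring
  have hfix : ∀ n : ℕ, ((gsigma Cm a * gsigma Cm b) ^ n) w = w := by
    intro n
    induction n with
    | zero => simp
    | succ n ih => rw [pow_succ, Module.End.mul_apply, gsigma_fix Cm hwa hwb, ih]
  have hv : v = x • es a + y • es b + w := by rw [hw]; module
  rw [Module.End.one_apply, hv]
  simp only [map_add, map_smul, hTma, hTmb, hfix]

/-- Order lower bound: powers of `s i * s i'` below `M i i'` are nontrivial. -/
theorem pow_simple_ne_one {W : Type*} [Group W] (cs : CoxeterSystem Cm W) {i i' : B}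
    (hne : i ≠ i') (hfin : Cm i i' ≠ 0) {n : ℕ} (h0 : 0 < n) (hn : n < Cm i i') :
    (cs.simple i * cs.simple i') ^ n ≠ 1 := by
  intro h
  set ρ := cs.lift ⟨fun a => gsigma Cm a, fun a b => gsigma_braid Cm a b⟩ with hρ
  have hρs : ∀ a : B, ρ (cs.simple a) = gsigma Cm a := fun a => cs.lift_apply_simple _ a
  have h1 : ((gsigma Cm i * gsigma Cm i') ^ n) = 1 := by
    have := congrArg ρ h
    rwa [map_pow, map_mul, hρs, hρs, map_one] at this
  have h2 : 2 ≤ Cm i i' := by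
    have := Cm.off_diagonal i i' hne
    omega
  have hmR : (0:ℝ) < ((Cm i i' : ℕ) : ℝ) := by positivity
  have hm2R : (2:ℝ) ≤ ((Cm i i' : ℕ) : ℝ) := by exact_mod_cast h2
  have hθpos : 0 < Real.pi / ((Cm i i' : ℕ) : ℝ) := by positivity
  have hθlt : Real.pi / ((Cm i i' : ℕ) : ℝ) < Real.pi := by
    rw [div_lt_iff₀ hmR]
    nlinarith [Real.pi_pos]
  have hsinpos : 0 < Real.sin (Real.pi / ((Cm i i' : ℕ) : ℝ)) :=
    Real.sin_pos_of_pos_of_lt_pi hθpos hθlt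
  obtain ⟨hTa, -⟩ := T_pow_es Cm i i' n
  rw [h1, Module.End.one_apply] at hTa
  have hcoord : Real.sin (2 * (n:ℝ) * (Real.pi / ((Cm i i' : ℕ) : ℝ))) = 0 := by
    have := congrArg (fun f : B →₀ ℝ => f i') hTa
    simpa [es, Finsupp.single_apply, hne, (Ne.symm hne)] using this.symm
  have hpi := Real.pi_pos
  have hn2 : ((Cm i i' : ℕ) : ℝ) = 2 * (n:ℝ) := by
    rcases Real.sin_eq_zero_iff.mp hcoord with ⟨j, hj⟩
    have hj' : (j:ℝ) * ((Cm i i' : ℕ) : ℝ) = 2 * (n:ℝ) := by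
      field_simp at hj
      nlinarith [hj]
    have hnm : (0:ℝ) < 2 * (n:ℝ) := by positivity
    have hnlt : 2 * (n:ℝ) < 2 * ((Cm i i' : ℕ) : ℝ) := by
      have : (n:ℝ) < ((Cm i i' : ℕ) : ℝ) := by exact_mod_cast hn
      linarith
    have hj0 : (0:ℝ) < (j:ℝ) := by nlinarith
    have hjlt : (j:ℝ) < 2 := by nlinarith
    have hj1 : j = 1 := by
      have h0' : 0 < j := by exact_mod_cast hj0
      have h2' : j < 2 := by exact_mod_cast hjlt
      omega
    rw [hj1] at hj'
    push_cast at hj'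
    linarith
  have hcoord2 : Real.sin (Real.pi / ((Cm i i' : ℕ) : ℝ))
      = Real.sin ((2 * (n:ℝ) + 1) * (Real.pi / ((Cm i i' : ℕ) : ℝ))) := by
    have := congrArg (fun f : B →₀ ℝ => f i) hTa
    simpa [es, Finsupp.single_apply, hne, (Ne.symm hne)] using this
  have hang : (2 * (n:ℝ) + 1) * (Real.pi / ((Cm i i' : ℕ) : ℝ))
      = Real.pi + Real.pi / ((Cm i i' : ℕ) : ℝ) := by
    rw [← hn2]
    field_simp
  rw [hang, Real.sin_add] at hcoord2
  simp [Real.sin_pi, Real.cos_pi] at hcoord2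
  linarith
end RWB


namespace RWB
open CoxeterSystem List

attribute [local instance] Classical.propDecidable

variable {B : Type*} {W : Type*} [Group W] {Cm : CoxeterMatrix B} (cs : CoxeterSystem Cm W)

local prefix:100 "s" => cs.simple
local prefix:100 "π" => cs.wordProd
local prefix:100 "ℓ" => cs.length

/-- indicator -/
noncomputable def dl (u v : W) : ZMod 2 := if u = v then 1 else 0

lemma dl_conj (u t v : W) : dl (u * t * u⁻¹) v = dl t (u⁻¹ * v * u) := by
  unfold dl
  congr 1
  simp only [eq_iff_iff]
  constructor
  · rintro rfl; group
  · rintro rfl; group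

/-- The action of a simple reflection on `W × ZMod 2`. -/
noncomputable def eta (i : B) : Function.End (W × ZMod 2) :=
  fun x => (cs.simple i * x.1 * (cs.simple i)⁻¹, x.2 + dl x.1 (cs.simple i))

lemma sb_pow_comm (a b : B) (q : ℕ) :
    s b * (s a * s b) ^ q = ((s a * s b) ^ q)⁻¹ * s b := by
  induction q with
  | zero => simp
  | succ q ih =>
    have h1 : s b * (s a * s b) = (s a * s b)⁻¹ * s b := by
      rw [mul_inv_rev, inv_simple, inv_simple]
      group
    rw [pow_succ', ← mul_assoc, h1, mul_assoc, ih]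
    generalize s a * s b = z
    group

lemma conj_pow_sb (a b : B) (q : ℕ) :
    ((s a * s b) ^ q)⁻¹ * s b * (s a * s b) ^ q = ((s a * s b) ^ (2 * q))⁻¹ * s b := by
  rw [mul_assoc, sb_pow_comm]
  generalize s a * s b = z
  group

lemma conj_pow_sbab (a b : B) (q : ℕ) :
    ((s a * s b) ^ q)⁻¹ * ((s b)⁻¹ * s a * s b) * (s a * s b) ^ q
      = ((s a * s b) ^ (2 * q + 1))⁻¹ * s b := by
  have h1 : (s b)⁻¹ * s a * s b = (s a * s b)⁻¹ * s b := by
    rw [mul_inv_rev, inv_simple, inv_simple]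
  rw [h1, show ((s a * s b) ^ q)⁻¹ * ((s a * s b)⁻¹ * s b) * (s a * s b) ^ q
      = ((s a * s b) ^ q)⁻¹ * (s a * s b)⁻¹ * (s b * (s a * s b) ^ q) from by group,
    sb_pow_comm]
  generalize s a * s b = z
  group

lemma eta_mul_pow (a b : B) (n : ℕ) (x : W × ZMod 2) :
    ((eta cs a * eta cs b) ^ n) x =
      ((s a * s b) ^ n * x.1 * ((s a * s b) ^ n)⁻¹,
        x.2 + ∑ q ∈ Finset.range n,
          (dl x.1 (((s a * s b) ^ (2 * q))⁻¹ * s b)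
            + dl x.1 (((s a * s b) ^ (2 * q + 1))⁻¹ * s b))) := by
  have hmul : ∀ (f g : Function.End (W × ZMod 2)) y, (f * g) y = f (g y) := fun _ _ _ => rfl
  induction n with
  | zero =>
    simp [Function.End.one_def]
  | succ n ih =>
    rw [pow_succ', hmul, hmul, ih]
    simp only [eta]
    have e1 : dl ((s a * s b) ^ n * x.1 * (((s a * s b) ^ n)⁻¹)) (s b)
        = dl x.1 (((s a * s b) ^ (2 * n))⁻¹ * s b) := by
      rw [dl_conj, conj_pow_sb]
    have e2 : dl (s b * ((s a * s b) ^ n * x.1 * ((s a * s b) ^ n)⁻¹) * (s b)⁻¹) (s a)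
        = dl x.1 (((s a * s b) ^ (2 * n + 1))⁻¹ * s b) := by
      rw [dl_conj, dl_conj, conj_pow_sbab]
    refine Prod.ext ?_ ?_
    · show s a * (s b * ((s a * s b) ^ n * x.1 * ((s a * s b) ^ n)⁻¹) * (s b)⁻¹) * (s a)⁻¹
        = (s a * s b) ^ (n + 1) * x.1 * ((s a * s b) ^ (n + 1))⁻¹
      rw [show s a * (s b * ((s a * s b) ^ n * x.1 * ((s a * s b) ^ n)⁻¹) * (s b)⁻¹) * (s a)⁻¹
          = (s a * s b) * ((s a * s b) ^ n * x.1 * ((s a * s b) ^ n)⁻¹) * (s a * s b)⁻¹ from by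
        group]
      generalize s a * s b = z
      group
    · show x.2 + _ + dl _ (s b) + dl _ (s a) = _
      rw [e1, e2, Finset.sum_range_succ]
      ring

lemma sum_pair (f : ℕ → ZMod 2) (n : ℕ) :
    ∑ q ∈ Finset.range n, (f (2 * q) + f (2 * q + 1)) = ∑ r ∈ Finset.range (2 * n), f r := by
  induction n with
  | zero => simp
  | succ n ih =>
    rw [Finset.sum_range_succ, ih, show 2 * (n + 1) = (2 * n + 1) + 1 from by ring,
      Finset.sum_range_succ, Finset.sum_range_succ]
    ring

lemma eta_braid (a b : B) : (eta cs a * eta cs b) ^ (Cm a b) = 1 := by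
  have hp : (s a * s b) ^ (Cm a b) = 1 := cs.simple_mul_simple_pow a b
  funext x
  rw [eta_mul_pow, hp]
  have hsum : ∑ q ∈ Finset.range (Cm a b),
      (dl x.1 (((s a * s b) ^ (2 * q))⁻¹ * s b)
        + dl x.1 (((s a * s b) ^ (2 * q + 1))⁻¹ * s b)) = 0 := by
    rw [sum_pair (fun r => dl x.1 (((s a * s b) ^ r)⁻¹ * s b)) (Cm a b), two_mul,
      Finset.sum_range_add]
    have heq : ∀ r, dl x.1 (((s a * s b) ^ (Cm a b + r))⁻¹ * s b)
        = dl x.1 (((s a * s b) ^ r)⁻¹ * s b) := by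
      intro r
      rw [pow_add, hp, one_mul]
    rw [Finset.sum_congr rfl (fun r _ => heq r)]
    have : ∀ z : ZMod 2, z + z = 0 := by decide
    exact this _
  rw [hsum]
  show (_, _) = x
  simp

/-- The lifted homomorphism `W →* Function.End (W × ZMod 2)`. -/
noncomputable def phi : W →* Function.End (W × ZMod 2) :=
  cs.lift ⟨fun i => eta cs i, fun a b => eta_braid cs a b⟩

lemma phi_simple (i : B) : phi cs (s i) = eta cs i := by
  exact cs.lift_apply_simple _ i

lemma phi_wordProd (ω : List B) (t : W) (z : ZMod 2) :
    phi cs (π ω) (t, z) = (π ω * t * (π ω)⁻¹,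
      z + (((cs.rightInvSeq ω).count t : ℕ) : ZMod 2)) := by
  induction ω generalizing z with
  | nil =>
    have h1 : phi cs (π ([] : List B)) (t, z) = (t, z) := by
      rw [wordProd_nil, map_one]; rfl
    rw [h1, wordProd_nil, rightInvSeq_nil]
    simp
  | cons a ω ih =>
    have hmul : ∀ (f g : Function.End (W × ZMod 2)) y, (f * g) y = f (g y) := fun _ _ _ => rfl
    rw [wordProd_cons, map_mul, hmul, ih, phi_simple]
    show (s a * _ * (s a)⁻¹, _ + dl _ (s a)) = _
    have hhead : cs.rightInvSeq (a :: ω) = ((π ω)⁻¹ * s a * π ω) :: cs.rightInvSeq ω := rfl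
    refine Prod.ext ?_ ?_
    · show s a * (π ω * t * (π ω)⁻¹) * (s a)⁻¹ = π (a :: ω) * t * (π (a :: ω))⁻¹
      rw [wordProd_cons]
      group
    · show z + _ + dl (π ω * t * (π ω)⁻¹) (s a) = _
      rw [dl_conj, hhead, List.count_cons]
      have : dl t ((π ω)⁻¹ * s a * π ω)
          = if ((π ω)⁻¹ * s a * π ω) == t then (1 : ZMod 2) else 0 := by
        unfold dl
        simp only [beq_iff_eq]
        congr 1
        simp [eq_comm]
      rw [this]
      push_cast
      split <;> ring

/-- Parity invariant. -/
noncomputable def nn (w t : W) : ZMod 2 := ((phi cs) w (t, 0)).2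

lemma nn_wordProd (ω : List B) (t : W) :
    nn cs (π ω) t = (((cs.rightInvSeq ω).count t : ℕ) : ZMod 2) := by
  rw [nn, phi_wordProd]
  simp

lemma phi_apply (w t : W) (z : ZMod 2) :
    phi cs w (t, z) = (w * t * w⁻¹, z + nn cs w t) := by
  obtain ⟨ω, rfl⟩ := cs.wordProd_surjective w
  rw [phi_wordProd, nn_wordProd]

lemma nn_mul (u v t : W) : nn cs (u * v) t = nn cs v t + nn cs u (v * t * v⁻¹) := by
  have hmul : ∀ (f g : Function.End (W × ZMod 2)) y, (f * g) y = f (g y) := fun _ _ _ => rfl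
  have h1 : phi cs (u * v) (t, 0) = phi cs u (phi cs v (t, 0)) := by rw [map_mul, hmul]
  rw [phi_apply, phi_apply, phi_apply] at h1
  have := congrArg Prod.snd h1
  simpa [nn] using this

lemma rightInvSeq_append' (α β : List B) :
    cs.rightInvSeq (α ++ β)
      = (cs.rightInvSeq α).map (fun x => (π β)⁻¹ * x * (π β)) ++ cs.rightInvSeq β := by
  induction α with
  | nil => simp
  | cons a α ih =>
    have h1 : cs.rightInvSeq (a :: (α ++ β))
        = ((π (α ++ β))⁻¹ * s a * π (α ++ β)) :: cs.rightInvSeq (α ++ β) := rfl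
    have h2 : cs.rightInvSeq (a :: α) = ((π α)⁻¹ * s a * π α) :: cs.rightInvSeq α := rfl
    rw [cons_append, h1, ih, h2, List.map_cons]
    congr 1
    rw [wordProd_append]
    group

lemma leftInvSeq_eq_map_ris (ω : List B) :
    cs.leftInvSeq ω = (cs.rightInvSeq ω).map (fun x => (π ω) * x * (π ω)⁻¹) := by
  induction ω with
  | nil => simp
  | cons a ω ih =>
    have h1 : cs.leftInvSeq (a :: ω) = s a :: (cs.leftInvSeq ω).map (MulAut.conj (s a)) := rfl
    have h2 : cs.rightInvSeq (a :: ω) = ((π ω)⁻¹ * s a * π ω) :: cs.rightInvSeq ω := rfl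
    rw [h1, h2, ih, List.map_cons, List.map_map]
    congr 1
    · rw [wordProd_cons]
      group
    · apply List.map_congr_left
      intro x hx
      simp only [Function.comp_apply, MulAut.conj_apply, wordProd_cons]
      group

lemma nn_reflection {t : W} (ht : cs.IsReflection t) : nn cs t t = 1 := by
  obtain ⟨u, j, rfl⟩ := ht
  obtain ⟨c, rfl⟩ := cs.wordProd_surjective u
  set t := π c * s j * (π c)⁻¹ with hts
  have hτ : π (c ++ j :: c.reverse) = t := by
    rw [wordProd_append, wordProd_cons, wordProd_reverse, hts]
    group
  have hnn := nn_wordProd cs (c ++ j :: c.reverse) t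
  rw [hτ] at hnn
  rw [hnn]
  have hris : cs.rightInvSeq (c ++ j :: c.reverse)
      = (cs.rightInvSeq c).map (fun x => (π (j :: c.reverse))⁻¹ * x * (π (j :: c.reverse)))
        ++ (((π c.reverse)⁻¹ * s j * π c.reverse) :: cs.rightInvSeq c.reverse) := by
    rw [rightInvSeq_append']
    rfl
  rw [hris, List.count_append, List.count_cons]
  have hmid : ((π c.reverse)⁻¹ * s j * π c.reverse) = t := by
    rw [wordProd_reverse, hts]
    group
  rw [hmid]
  simp only [beq_self_eq_true, if_true]
  have hinj : Function.Injective (fun x : W => (π (j :: c.reverse))⁻¹ * x * (π (j :: c.reverse))) := by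
    intro x y hxy
    simpa using hxy
  have hc1 : (List.map (fun x => (π (j :: c.reverse))⁻¹ * x * (π (j :: c.reverse)))
      (cs.rightInvSeq c)).count t = (cs.rightInvSeq c).count (s j) := by
    have hts' : t = (fun x : W => (π (j :: c.reverse))⁻¹ * x * (π (j :: c.reverse))) (s j) := by
      simp only [wordProd_cons, wordProd_reverse, hts]
      group
    rw [hts', List.count_map_of_injective _ _ hinj]
  have hc2 : (cs.rightInvSeq c.reverse).count t = (cs.rightInvSeq c).count (s j) := by
    rw [cs.rightInvSeq_reverse, List.count_reverse, leftInvSeq_eq_map_ris]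
    have hinj2 : Function.Injective (fun x : W => (π c) * x * (π c)⁻¹) := by
      intro x y hxy
      simpa using hxy
    have hts'' : t = (fun x : W => (π c) * x * (π c)⁻¹) (s j) := by rw [hts]
    rw [hts'', List.count_map_of_injective _ _ hinj2]
  rw [hc1, hc2]
  push_cast
  have h2 : (2 : ZMod 2) = 0 := by decide
  linear_combination ((cs.rightInvSeq c).count (s j) : ZMod 2) * h2

lemma nn_isRightInversion {w t : W} (ht : cs.IsRightInversion w t) : nn cs w t = 1 := by
  have hrefl := ht.1
  have hw : w = (w * t) * t := by rw [mul_assoc, hrefl.mul_self, mul_one]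
  have h1 : nn cs ((w * t) * t) t = nn cs t t + nn cs (w * t) (t * t * t⁻¹) := nn_mul cs _ _ _
  have h2 : t * t * t⁻¹ = t := by rw [hrefl.mul_self, one_mul, hrefl.inv]
  have h3 : nn cs (w * t) t = 0 := by
    obtain ⟨ω, hred, hprod⟩ := cs.exists_reduced_word' (w * t)
    rw [hprod, nn_wordProd]
    have hnotmem : t ∉ cs.rightInvSeq ω := by
      intro hmem
      have hinv := cs.isRightInversion_of_mem_rightInvSeq hred hmem
      rw [← hprod] at hinv
      have : ℓ (w * t * t) < ℓ (w * t) := hinv.2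
      rw [mul_assoc, hrefl.mul_self, mul_one] at this
      exact lt_asymm this ht.2
    rw [List.count_eq_zero.mpr hnotmem]
    simp
  rw [hw, h1, h2, h3, nn_reflection cs hrefl, add_zero]

theorem mem_rightInvSeq_of_isRightInversion {ω : List B} {w t : W} (hω : π ω = w)
    (ht : cs.IsRightInversion w t) : t ∈ cs.rightInvSeq ω := by
  have h1 : nn cs w t = 1 := nn_isRightInversion cs ht
  rw [← hω, nn_wordProd] at h1
  by_contra hmem
  rw [List.count_eq_zero.mpr hmem] at h1
  simp at h1

lemma conj_pow_self (i i' : B) (n : ℕ) :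
    (s i * s i') ^ n * cs.simple i' * (s i * s i') ^ n = cs.simple i' := by
  induction n with
  | zero => simp
  | succ n ih =>
    nth_rewrite 2 [pow_succ]
    nth_rewrite 1 [pow_succ']
    rw [show s i * s i' * (s i * s i') ^ n * s i' * ((s i * s i') ^ n * (s i * s i'))
        = s i * s i' * ((s i * s i') ^ n * s i' * (s i * s i') ^ n) * (s i * s i') from by
      group, ih]
    simp [mul_assoc]

lemma mem_ris_alternatingWord (i i' : B) (k : ℕ) (t : W)
    (ht : t ∈ cs.rightInvSeq (alternatingWord i i' k)) :
    ∃ q < k, (s i * s i') ^ q * t = cs.simple i' := by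
  induction k with
  | zero => simp [alternatingWord] at ht
  | succ k ih =>
    rw [alternatingWord_succ'] at ht
    have hcons : cs.rightInvSeq ((if Even k then i' else i) :: alternatingWord i i' k)
        = ((π (alternatingWord i i' k))⁻¹ * s (if Even k then i' else i)
            * π (alternatingWord i i' k)) :: cs.rightInvSeq (alternatingWord i i' k) := rfl
    rw [hcons] at ht
    rcases List.mem_cons.mp ht with h | h
    · refine ⟨k, Nat.lt_succ_self k, ?_⟩
      rw [h, cs.prod_alternatingWord_eq_mul_pow]
      rcases Nat.even_or_odd k with he | ho
      · obtain ⟨m, rfl⟩ := he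
        have hk2 : (m + m) / 2 = m := by omega
        simp only [if_pos (Even.add_self m), hk2, one_mul, mul_inv_rev]
        rw [show (s i * s i') ^ (m + m) * (((s i * s i') ^ m)⁻¹ * s i' * (s i * s i') ^ m)
            = (s i * s i') ^ (m + m) * ((s i * s i') ^ m)⁻¹ * s i' * (s i * s i') ^ m from by
          group]
        rw [show (s i * s i') ^ (m + m) * ((s i * s i') ^ m)⁻¹ = (s i * s i') ^ m from by
          rw [pow_add]; group]
        exact conj_pow_self cs i i' m
      · obtain ⟨m, rfl⟩ := ho
        have hne : ¬ Even (2 * m + 1) := by simp [parity_simps]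
        have hk2 : (2 * m + 1) / 2 = m := by omega
        simp only [if_neg hne, hk2]
        have g1 : ∀ z w : W, ∀ p : ℕ, z ^ (2 * p + 1) * ((z ^ p)⁻¹ * (z⁻¹ * w) * z ^ p)
            = z ^ p * w * z ^ p := by
          intro z w p
          group
        rw [show (s i' * (s i * s i') ^ m)⁻¹ * s i * (s i' * (s i * s i') ^ m)
            = ((s i * s i') ^ m)⁻¹ * ((s i')⁻¹ * s i * s i') * (s i * s i') ^ m from by
          group]
        rw [show (s i')⁻¹ * s i * s i' = (s i * s i')⁻¹ * s i' from by
          rw [mul_inv_rev, inv_simple, inv_simple]]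
        rw [g1]
        exact conj_pow_self cs i i' m
    · obtain ⟨q, hq, hqe⟩ := ih h
      exact ⟨q, Nat.lt_succ_of_lt hq, hqe⟩

lemma eraseIdx_append_left {α : Type*} (l l' : List α) (j : ℕ) (hj : j < l.length) :
    (l ++ l').eraseIdx j = l.eraseIdx j ++ l' := by
  induction l generalizing j with
  | nil => simp at hj
  | cons a l ih =>
    cases j with
    | zero => simp
    | succ j =>
      simp only [List.cons_append, List.eraseIdx_cons_succ, List.cons_append]
      rw [ih j (by simpa using hj)]

lemma step_lemma {w : W} {i i' : B} (hne : i ≠ i') (hfin : Cm i i' ≠ 0)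
    (hi' : cs.IsRightDescent w i') {k : ℕ} (hk : k + 1 ≤ Cm i i')
    (h : ∃ ω', cs.IsReduced (ω' ++ alternatingWord i' i k)
      ∧ π (ω' ++ alternatingWord i' i k) = w) :
    ∃ ω'', cs.IsReduced (ω'' ++ alternatingWord i i' (k + 1))
      ∧ π (ω'' ++ alternatingWord i i' (k + 1)) = w := by
  obtain ⟨ω', hred, hprod⟩ := h
  have hlen : ℓ w = ω'.length + k := by
    have h' := hred
    unfold CoxeterSystem.IsReduced at h'
    rw [hprod] at h'
    rw [h', List.length_append, length_alternatingWord]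
  have hmem : cs.simple i' ∈ cs.rightInvSeq (ω' ++ alternatingWord i' i k) :=
    mem_rightInvSeq_of_isRightInversion cs hprod
      ((cs.isRightInversion_simple_iff_isRightDescent w i').mpr hi')
  rw [rightInvSeq_append'] at hmem
  rcases List.mem_append.mp hmem with hL | hR
  · -- exchange happens in ω'
    obtain ⟨x, hx, hxe⟩ := List.mem_map.mp hL
    obtain ⟨j, hj, hjx⟩ := List.mem_iff_getElem.mp hx
    have hjlen : j < ω'.length := by
      rw [cs.length_rightInvSeq] at hj
      exact hj
    have hget : (cs.rightInvSeq (ω' ++ alternatingWord i' i k)).getD j 1 = cs.simple i' := by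
      rw [rightInvSeq_append']
      rw [List.getD_append _ _ _ _ (by simpa using hjlen)]
      rw [List.getD_eq_getElem _ _ (by simpa using hjlen)]
      rw [List.getElem_map]
      rw [hjx, hxe]
    have hkey := cs.wordProd_mul_getD_rightInvSeq (ω' ++ alternatingWord i' i k) j
    rw [hget, hprod] at hkey
    rw [eraseIdx_append_left _ _ j hjlen] at hkey
    -- hkey : w * s i' = π (ω'.eraseIdx j ++ alternatingWord i' i k)
    have hprod2 : π (ω'.eraseIdx j ++ alternatingWord i i' (k + 1)) = w := by
      rw [alternatingWord_succ, List.concat_eq_append, ← List.append_assoc, wordProd_append,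
        ← hkey, wordProd_singleton]
      simp
    refine ⟨ω'.eraseIdx j, ?_, hprod2⟩
    unfold CoxeterSystem.IsReduced
    rw [hprod2, List.length_append, length_alternatingWord]
    have h1 := List.length_eraseIdx_add_one hjlen
    omega
  · -- cannot happen inside the alternating suffix
    exfalso
    obtain ⟨q, hq, hqe⟩ := mem_ris_alternatingWord cs i' i k _ hR
    have hone : (s i' * s i) ^ (q + 1) = 1 := by
      rw [pow_succ, ← mul_assoc, hqe]
      simp
    have hfin' : Cm i' i ≠ 0 := by rw [Cm.symmetric i' i]; exact hfin
    have hqlt : q + 1 < Cm i' i := by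
      rw [Cm.symmetric i' i]
      omega
    exact pow_simple_ne_one Cm cs hne.symm hfin' (Nat.succ_pos q) hqlt hone

theorem reduced_word_ending_in_braid' (w : W) (i i' : B) (hi : cs.IsRightDescent w i)
    (hi' : cs.IsRightDescent w i') (hne : i ≠ i') (hfin : Cm i i' ≠ 0) :
    ∃ ω' : List B, cs.IsReduced (ω' ++ alternatingWord i i' (Cm i i')) ∧
      cs.wordProd (ω' ++ alternatingWord i i' (Cm i i')) = w := by
  have base : ∀ a b : B, cs.IsRightDescent w b →
      ∃ ω₀, cs.IsReduced (ω₀ ++ alternatingWord a b 1)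
        ∧ π (ω₀ ++ alternatingWord a b 1) = w := by
    intro a b hb
    obtain ⟨ω₀, hlen, hw⟩ := cs.exists_reduced_word (w * s b)
    have halt : alternatingWord a b 1 = [b] := rfl
    have hp : π (ω₀ ++ alternatingWord a b 1) = w := by
      rw [halt, wordProd_append, ← hw, wordProd_singleton, simple_mul_simple_cancel_right]
    refine ⟨ω₀, ?_, hp⟩
    unfold CoxeterSystem.IsReduced
    rw [hp, halt, List.length_append]
    have hd := cs.isRightDescent_iff.mp hb
    simp only [List.length_singleton]
    unfold CoxeterSystem.IsReduced at hlen
    rw [← hw] at hlen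
    omega
  have key : ∀ k, 1 ≤ k → k ≤ Cm i i' →
      (∃ ω', cs.IsReduced (ω' ++ alternatingWord i i' k)
        ∧ π (ω' ++ alternatingWord i i' k) = w)
      ∧ (∃ ω', cs.IsReduced (ω' ++ alternatingWord i' i k)
        ∧ π (ω' ++ alternatingWord i' i k) = w) := by
    intro k
    induction k with
    | zero => intro h; exact absurd h (by omega)
    | succ k ih =>
      intro h1 hk
      rcases Nat.eq_zero_or_pos k with rfl | hkpos
      · exact ⟨base i i' hi', base i' i hi⟩
      · obtain ⟨P1, P2⟩ := ih hkpos (by omega)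
        refine ⟨step_lemma cs hne hfin hi' hk P2, ?_⟩
        refine step_lemma cs hne.symm (by rw [Cm.symmetric i' i]; exact hfin) hi ?_ P1
        rw [Cm.symmetric i' i]
        exact hk
  have h2 : 2 ≤ Cm i i' := by
    have := Cm.off_diagonal i i' hne
    omega
  exact (key (Cm i i') (by omega) le_rfl).1

end RWB



open CoxeterSystem

variable {B W : Type*} [Group W] {Cm : CoxeterMatrix B} (cs : CoxeterSystem Cm W)

/-- Bruhat order on the Coxeter group `W`: the reflexive-transitive closure of the
relation "multiply on the right by a reflection, increasing the length". -/
def bruhatLE : W → W → Prop :=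
  Relation.ReflTransGen (fun u v => (∃ t, cs.IsReflection t ∧ v = u * t) ∧
    cs.length u < cs.length v)

/-- The covering relation of Bruhat order: `u ⋖ v` iff `u⁻¹v` is a reflection and
`ℓ(v) = ℓ(u) + 1`. -/
def bruhatCovBy (u v : W) : Prop :=
  cs.IsReflection (u⁻¹ * v) ∧ cs.length v = cs.length u + 1

/-- The standard parabolic subgroup `W_J` generated by the simple reflections
indexed by `J`. -/
def parabolic (J : Set B) : Subgroup W := Subgroup.closure (cs.simple '' J)

/-- `w` belongs to the set `W^J` of minimal length coset representatives of `W/W_J`. -/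
def isMinimalRight (J : Set B) (w : W) : Prop := ∀ j ∈ J, ¬ cs.IsRightDescent w j

/-- `w` belongs to the set `^J W` of minimal length coset representatives of `W_J\W`. -/
def isMinimalLeft (J : Set B) (w : W) : Prop := ∀ j ∈ J, ¬ cs.IsLeftDescent w j

/-- If `s` and `t` are both right descents of `w` (with `m_{s,t}` finite), then `w` has
a reduced expression ending in the alternating word of `m_{s,t}` letters in `s, t`. -/
theorem reduced_word_ending_in_braid (w : W) (i i' : B) (hi : cs.IsRightDescent w i)
    (hi' : cs.IsRightDescent w i') (hne : i ≠ i') (hfin : Cm i i' ≠ 0) :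
    ∃ ω' : List B, cs.IsReduced (ω' ++ alternatingWord i i' (Cm i i')) ∧
      cs.wordProd (ω' ++ alternatingWord i i' (Cm i i')) = w := by
  exact RWB.reduced_word_ending_in_braid' cs w i i' hi hi' hne hfin
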